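/- Let S(n) denote the set of real n×n matrices all of whose eigenvalues λ + iμ (complex roots of the characteristic polynomial) satisfy −π < μ < π. Then the exponential map is injective on S(n): if X₁, X₂ ∈ S(n) and exp(X₁) = exp(X₂), then X₁ = X₂. -/

import Mathlib

open Matrix

/-- `z` is a (complex) eigenvalue of the real matrix `S`, i.e. a complex root of its
characteristic polynomial. -/
def eigR {n : ℕ} (S : Matrix (Fin n) (Fin n) ℝ) (z : ℂ) : Prop :=
  (S.charpoly.map (algebraMap ℝ ℂ)).IsRoot z

namespace ExpInjAux

open Polynomial


open Polynomial

/-- Injectivity of the scalar exponential on the horizontal strip. -/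
lemma strip_inj {a b : ℂ} (ha₁ : -Real.pi < a.im) (ha₂ : a.im < Real.pi)
    (hb₁ : -Real.pi < b.im) (hb₂ : b.im < Real.pi) (h : Complex.exp a = Complex.exp b) :
    a = b := by
  obtain ⟨k, hk⟩ := Complex.exp_eq_exp_iff_exists_int.mp h
  have him : a.im = b.im + (k : ℝ) * (2 * Real.pi) := by
    have := congrArg Complex.im hk
    simp only [Complex.add_im, Complex.mul_im, Complex.intCast_re, Complex.intCast_im] at this
    simp only [Complex.mul_im, Complex.mul_re, Complex.I_im, Complex.I_re, Complex.ofReal_re,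
      Complex.ofReal_im, Complex.re_ofNat, Complex.im_ofNat] at this
    rw [this]; ring
  have hπ := Real.pi_pos
  have h1 : ((k : ℝ)) < 1 := by nlinarith
  have h2 : (-1 : ℝ) < (k : ℝ) := by nlinarith
  have hk0 : k = 0 := by
    have h1' : k < 1 := by exact_mod_cast h1
    have h2' : (-1 : ℤ) < k := by exact_mod_cast h2
    omega
  rw [hk0] at hk
  simpa using hk

/-- A polynomial `≡ X mod X²` admits a compositional inverse modulo any power of `X`. -/
lemma exists_comp_inverse (φ : ℂ[X]) (hφ : (X : ℂ[X]) ^ 2 ∣ φ - X) (m : ℕ) :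
    ∃ ψ : ℂ[X], (X : ℂ[X]) ^ m ∣ ψ.comp φ - X := by
  have hXφ : (X : ℂ[X]) ∣ φ := by
    have : (X : ℂ[X]) ∣ φ - X := (dvd_pow_self (X : ℂ[X]) two_ne_zero).trans hφ
    simpa using dvd_add this (dvd_refl X)
  induction m with
  | zero => exact ⟨X, by simp⟩
  | succ m ih =>
    rcases Nat.eq_zero_or_pos m with hm | hm
    · subst hm
      refine ⟨X, ?_⟩
      simpa using ((dvd_pow_self (X : ℂ[X]) two_ne_zero).trans hφ)
    · obtain ⟨ψ, hψ⟩ := ih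
      obtain ⟨E, hE⟩ := hψ
      set c := E.coeff 0 with hc
      refine ⟨ψ - C c * X ^ m, ?_⟩
      have hcomp : (ψ - C c * X ^ m).comp φ - X =
          (ψ.comp φ - X - c • X ^ m) - C c * (φ ^ m - X ^ m) := by
        simp [sub_comp, mul_comp, C_comp, pow_comp, X_comp, smul_eq_C_mul]
        ring
      rw [hcomp]
      have h1 : (X : ℂ[X]) ^ (m + 1) ∣ ψ.comp φ - X - c • X ^ m := by
        rw [hE, hc, smul_eq_C_mul]
        have : (X : ℂ[X]) ^ m * E - C (E.coeff 0) * X ^ m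
            = X ^ m * (E - C (E.coeff 0)) := by ring
        rw [this, pow_succ]
        exact mul_dvd_mul_left _ (by
          rw [X_dvd_iff]; simp)
      have h2 : (X : ℂ[X]) ^ (m + 1) ∣ φ ^ m - X ^ m := by
        have hgeom : (∑ i ∈ Finset.range m, φ ^ i * X ^ (m - 1 - i)) * (φ - X)
            = φ ^ m - X ^ m := geom_sum₂_mul φ X m
        rw [← hgeom]
        have hsum : (X : ℂ[X]) ^ (m - 1) ∣ ∑ i ∈ Finset.range m, φ ^ i * X ^ (m - 1 - i) := by
          refine Finset.dvd_sum fun i hi => ?_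
          have hi' : i < m := Finset.mem_range.mp hi
          have : (X : ℂ[X]) ^ (m - 1) = X ^ i * X ^ (m - 1 - i) := by
            rw [← pow_add]
            congr 1
            omega
          rw [this]
          exact mul_dvd_mul (pow_dvd_pow_of_dvd hXφ i) dvd_rfl
        have : (m + 1) = (m - 1) + 2 := by omega
        rw [this, pow_add]
        exact mul_dvd_mul hsum hφ
      exact dvd_sub h1 (Dvd.dvd.mul_left h2 _)

/-- Truncated exponential series. -/
noncomputable def trunc (d : ℕ) : ℂ[X] :=
  ∑ k ∈ Finset.range d, C ((k.factorial : ℂ)⁻¹) * X ^ k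

lemma trunc_coeff (d j : ℕ) :
    (trunc d).coeff j = if j < d then ((j.factorial : ℂ))⁻¹ else 0 := by
  classical
  rw [trunc, finset_sum_coeff]
  simp_rw [coeff_C_mul, coeff_X_pow]
  simp [Finset.sum_ite_eq' (Finset.range d) j, Finset.mem_range]

lemma X_sq_dvd_trunc_sub (d : ℕ) (hd : 2 ≤ d) :
    (X : ℂ[X]) ^ 2 ∣ (trunc d - 1) - X := by
  rw [X_pow_dvd_iff]
  intro j hj
  have h0 : 0 < d := by omega
  have h1 : 1 < d := by omega
  interval_cases j <;>
    simp [trunc_coeff, coeff_one, coeff_X, h0, h1, Nat.factorial]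

lemma X_dvd_trunc_sub_one (d : ℕ) (hd : 1 ≤ d) : (X : ℂ[X]) ∣ trunc d - 1 := by
  rw [X_dvd_iff]
  have h0 : 0 < d := by omega
  simp [trunc_coeff, coeff_one, h0, Nat.factorial]



variable {n : ℕ}

/-- Applying a matrix to a fixed vector, as a linear map in the matrix. -/
noncomputable def applyVec (v : Fin n → ℂ) : Matrix (Fin n) (Fin n) ℂ →ₗ[ℂ] (Fin n → ℂ) where
  toFun A := A *ᵥ v
  map_add' A B := Matrix.add_mulVec A B v
  map_smul' c A := by simp [Matrix.smul_mulVec]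

@[simp] lemma applyVec_apply (v : Fin n → ℂ) (A : Matrix (Fin n) (Fin n) ℂ) :
    applyVec v A = A *ᵥ v := rfl

lemma aeval_mulVec_zero {N : Matrix (Fin n) (Fin n) ℂ} {d : ℕ} {v : Fin n → ℂ}
    (hv : N ^ d *ᵥ v = 0) {ρ : ℂ[X]} (hρ : (X : ℂ[X]) ^ d ∣ ρ) :
    (aeval N ρ) *ᵥ v = 0 := by
  obtain ⟨r, rfl⟩ := hρ
  have : (X : ℂ[X]) ^ d * r = r * X ^ d := by ring
  rw [this, _root_.map_mul, map_pow, aeval_X, ← Matrix.mulVec_mulVec, hv, Matrix.mulVec_zero]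

lemma pow_mulVec_mem {N : Matrix (Fin n) (Fin n) ℂ} {d : ℕ} {w : Fin n → ℂ}
    (hw : N ^ d *ᵥ w = 0) (q : ℂ[X]) :
    N ^ d *ᵥ ((aeval N q) *ᵥ w) = 0 := by
  rw [Matrix.mulVec_mulVec]
  have e1 : aeval N ((X : ℂ[X]) ^ d * q) = N ^ d * aeval N q := by
    rw [_root_.map_mul, map_pow, aeval_X]
  have e2 : aeval N (q * (X : ℂ[X]) ^ d) = aeval N q * N ^ d := by
    rw [_root_.map_mul, map_pow, aeval_X]
  have : N ^ d * aeval N q = aeval N q * N ^ d := by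
    rw [← e1, ← e2, mul_comm]
  rw [this, ← Matrix.mulVec_mulVec, hw, Matrix.mulVec_zero]

lemma pow_action {N u : Matrix (Fin n) (Fin n) ℂ} {q : ℂ[X]} {d : ℕ}
    (hu : ∀ w, N ^ d *ᵥ w = 0 → u *ᵥ w = (aeval N q) *ᵥ w) :
    ∀ (j : ℕ) (w), N ^ d *ᵥ w = 0 → (u ^ j) *ᵥ w = (aeval N (q ^ j)) *ᵥ w := by
  intro j
  induction j with
  | zero => intro w _; simp
  | succ j ih =>
    intro w hw
    have h1 : u ^ (j + 1) = u ^ j * u := by rw [pow_succ]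
    rw [h1, ← Matrix.mulVec_mulVec, hu w hw, ih _ (pow_mulVec_mem hw q),
      Matrix.mulVec_mulVec, ← _root_.map_mul, ← pow_succ]

lemma aeval_action {N u : Matrix (Fin n) (Fin n) ℂ} {q : ℂ[X]} {d : ℕ}
    (hu : ∀ w, N ^ d *ᵥ w = 0 → u *ᵥ w = (aeval N q) *ᵥ w)
    (ψ : ℂ[X]) (w : Fin n → ℂ) (hw : N ^ d *ᵥ w = 0) :
    (aeval u ψ) *ᵥ w = (aeval N (ψ.comp q)) *ᵥ w := by
  rw [aeval_comp]
  rw [aeval_eq_sum_range (x := u) (p := ψ), aeval_eq_sum_range (x := aeval N q) (p := ψ)]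
  have h1 := map_sum (applyVec w) (fun i => ψ.coeff i • u ^ i) (Finset.range (ψ.natDegree + 1))
  have h2 := map_sum (applyVec w)
    (fun i => ψ.coeff i • (aeval N q) ^ i) (Finset.range (ψ.natDegree + 1))
  simp only [applyVec_apply] at h1 h2
  rw [h1, h2]
  refine Finset.sum_congr rfl fun i _ => ?_
  rw [Matrix.smul_mulVec, Matrix.smul_mulVec]
  congr 1
  rw [pow_action hu i w hw, ← map_pow]



variable {n : ℕ}







lemma exp_smul_one (μ : ℂ) :
    NormedSpace.exp (μ • (1 : Matrix (Fin n) (Fin n) ℂ)) = Complex.exp μ • 1 := by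
  have h0 : μ • (1 : Matrix (Fin n) (Fin n) ℂ) = Matrix.diagonal (fun _ => μ) := by
    ext i j
    by_cases h : i = j <;> simp [Matrix.one_apply, Matrix.diagonal, h]
  have h1 : Complex.exp μ • (1 : Matrix (Fin n) (Fin n) ℂ)
      = Matrix.diagonal (fun _ => Complex.exp μ) := by
    ext i j
    by_cases h : i = j <;> simp [Matrix.one_apply, Matrix.diagonal, h]
  have h2 : NormedSpace.exp (μ : ℂ) = Complex.exp μ := by
    rw [Complex.exp_eq_exp_ℂ]
  have h3 : NormedSpace.exp (fun _ : Fin n => μ) = fun _ : Fin n => Complex.exp μ := by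
    rw [Pi.exp_def]
    funext i
    exact h2
  rw [h0, h1, Matrix.exp_diagonal, h3]

lemma expSummable (N : Matrix (Fin n) (Fin n) ℂ) :
    Summable (fun k : ℕ => (k.factorial : ℝ)⁻¹ • N ^ k) := by
  letI : SeminormedRing (Matrix (Fin n) (Fin n) ℂ) := Matrix.linftyOpSemiNormedRing
  letI : NormedRing (Matrix (Fin n) (Fin n) ℂ) := Matrix.linftyOpNormedRing
  letI : NormedAlgebra ℝ (Matrix (Fin n) (Fin n) ℂ) := Matrix.linftyOpNormedAlgebra
  exact NormedSpace.expSeries_summable' (𝕂 := ℝ) N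

lemma exp_mulVec (M : Matrix (Fin n) (Fin n) ℂ) (μ : ℂ) (d : ℕ) (v : Fin n → ℂ)
    (hv : ((M - μ • 1) ^ d) *ᵥ v = 0) :
    (NormedSpace.exp M) *ᵥ v
      = Complex.exp μ • ((aeval (M - μ • 1) (trunc d)) *ᵥ v) := by
  set N := M - μ • 1 with hN
  have hsplit : M = μ • 1 + N := by rw [hN]; abel
  have hcomm : Commute (μ • (1 : Matrix (Fin n) (Fin n) ℂ)) N := (Commute.one_left N).smul_left μ
  have hexp : NormedSpace.exp M = Complex.exp μ • NormedSpace.exp N := by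
    rw [hsplit, Matrix.exp_add_of_commute _ _ hcomm, exp_smul_one, smul_mul_assoc, one_mul]
  rw [hexp, Matrix.smul_mulVec]
  congr 1
  have hsum := expSummable (n := n) N
  let L : Matrix (Fin n) (Fin n) ℂ →L[ℝ] (Fin n → ℂ) :=
    ⟨(applyVec v).restrictScalars ℝ, LinearMap.continuous_of_finiteDimensional _⟩
  have hL : ∀ A, L A = A *ᵥ v := fun A => rfl
  have h1 : (NormedSpace.exp N) *ᵥ v = ∑' k : ℕ, (k.factorial : ℝ)⁻¹ • (N ^ k *ᵥ v) := by
    rw [NormedSpace.exp_eq_tsum ℝ, ← hL _, L.map_tsum hsum]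
    refine tsum_congr fun k => ?_
    rw [L.map_smul, hL]
  have h2 : ∀ k ∉ Finset.range d, (k.factorial : ℝ)⁻¹ • (N ^ k *ᵥ v) = 0 := by
    intro k hk
    have hdk : d ≤ k := by simpa using hk
    have hNk : N ^ k = N ^ (k - d) * N ^ d := by rw [← pow_add]; congr 1; omega
    rw [hNk, ← Matrix.mulVec_mulVec, hv, Matrix.mulVec_zero, smul_zero]
  rw [h1, tsum_eq_sum h2]
  rw [trunc, map_sum, ← applyVec_apply, map_sum (applyVec v)]
  refine (Finset.sum_congr rfl fun k _ => ?_).symm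
  simp only [_root_.map_mul, aeval_C, map_pow, aeval_X, applyVec_apply]
  rw [← Algebra.smul_def, Matrix.smul_mulVec]
  rw [show ((k.factorial : ℝ))⁻¹ • (N ^ k *ᵥ v)
      = (algebraMap ℝ ℂ ((k.factorial : ℝ))⁻¹) • (N ^ k *ᵥ v) from
    (algebraMap_smul ℂ _ _).symm]
  norm_num


variable {n : ℕ}

















-- L2': single application
lemma exp_sub_mulVec (M : Matrix (Fin n) (Fin n) ℂ) (μ : ℂ) (d : ℕ)
    (w : Fin n → ℂ) (hw : ((M - μ • 1) ^ d) *ᵥ w = 0) :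
    (NormedSpace.exp M - Complex.exp μ • 1) *ᵥ w
      = (aeval (M - μ • 1) (C (Complex.exp μ) * (trunc d - 1))) *ᵥ w := by
  rw [_root_.map_mul, aeval_C, map_sub, aeval_one, ← Algebra.smul_def, smul_sub,
    Matrix.sub_mulVec, Matrix.sub_mulVec, exp_mulVec M μ d w hw,
    Matrix.smul_mulVec, Matrix.smul_mulVec, Matrix.one_mulVec]

-- L2
lemma exp_pow_sub_mulVec (M : Matrix (Fin n) (Fin n) ℂ) (μ : ℂ) (d : ℕ) (hd1 : 1 ≤ d)
    (v : Fin n → ℂ) (hv : ((M - μ • 1) ^ d) *ᵥ v = 0) :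
    ((NormedSpace.exp M - Complex.exp μ • 1) ^ d) *ᵥ v = 0 := by
  have hu : ∀ w, (M - μ • 1) ^ d *ᵥ w = 0 →
      (NormedSpace.exp M - Complex.exp μ • 1) *ᵥ w
        = (aeval (M - μ • 1) (C (Complex.exp μ) * (trunc d - 1))) *ᵥ w :=
    fun w hw => exp_sub_mulVec M μ d w hw
  rw [pow_action hu d v hv]
  refine aeval_mulVec_zero hv ?_
  rw [mul_pow]
  exact Dvd.dvd.mul_left (pow_dvd_pow_of_dvd (X_dvd_trunc_sub_one d hd1) d) _

-- L3
lemma log_mulVec (d : ℕ) (ψ : ℂ[X])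
    (hψ : (X : ℂ[X]) ^ d ∣ ψ.comp (trunc d - 1) - X)
    (M : Matrix (Fin n) (Fin n) ℂ) (μ : ℂ) (v : Fin n → ℂ)
    (hv : ((M - μ • 1) ^ d) *ᵥ v = 0) :
    M *ᵥ v = μ • v + (aeval ((Complex.exp μ)⁻¹ • NormedSpace.exp M - 1) ψ) *ᵥ v := by
  have hu : ∀ w, (M - μ • 1) ^ d *ᵥ w = 0 →
      ((Complex.exp μ)⁻¹ • NormedSpace.exp M - 1) *ᵥ w
        = (aeval (M - μ • 1) (trunc d - 1)) *ᵥ w := by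
    intro w hw
    rw [Matrix.sub_mulVec, Matrix.smul_mulVec, exp_mulVec M μ d w hw, smul_smul,
      inv_mul_cancel₀ (Complex.exp_ne_zero μ), one_smul, Matrix.one_mulVec, map_sub, aeval_one,
      Matrix.sub_mulVec, Matrix.one_mulVec]
  have h1 := aeval_action hu ψ v hv
  have hdecomp : ψ.comp (trunc d - 1) = X + (ψ.comp (trunc d - 1) - X) := by ring
  rw [h1, hdecomp, map_add, aeval_X, Matrix.add_mulVec, aeval_mulVec_zero hv hψ, add_zero,
    Matrix.sub_mulVec, Matrix.smul_mulVec, Matrix.one_mulVec]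
  abel

-- complexification commutes with exp
lemma exp_map_ofReal (A : Matrix (Fin n) (Fin n) ℝ) :
    NormedSpace.exp (A.map (algebraMap ℝ ℂ)) = (NormedSpace.exp A).map (algebraMap ℝ ℂ) := by
  have hsumR : Summable (fun k : ℕ => (k.factorial : ℝ)⁻¹ • A ^ k) := by
    letI : SeminormedRing (Matrix (Fin n) (Fin n) ℝ) := Matrix.linftyOpSemiNormedRing
    letI : NormedRing (Matrix (Fin n) (Fin n) ℝ) := Matrix.linftyOpNormedRing
    letI : NormedAlgebra ℝ (Matrix (Fin n) (Fin n) ℝ) := Matrix.linftyOpNormedAlgebra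
    exact NormedSpace.expSeries_summable' (𝕂 := ℝ) A
  let Φ : Matrix (Fin n) (Fin n) ℝ →ₗ[ℝ] Matrix (Fin n) (Fin n) ℂ :=
    { toFun := fun B => B.map (algebraMap ℝ ℂ)
      map_add' := fun B C => by ext i j; simp
      map_smul' := fun c B => by ext i j; simp }
  let ΦL : Matrix (Fin n) (Fin n) ℝ →L[ℝ] Matrix (Fin n) (Fin n) ℂ :=
    ⟨Φ, LinearMap.continuous_of_finiteDimensional _⟩
  have hΦ : ∀ B, ΦL B = B.map (algebraMap ℝ ℂ) := fun B => rfl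
  have hL : NormedSpace.exp (A.map (algebraMap ℝ ℂ))
      = ∑' k : ℕ, (k.factorial : ℝ)⁻¹ • (A.map (algebraMap ℝ ℂ)) ^ k := by
    rw [NormedSpace.exp_eq_tsum ℝ]
  have hR : (NormedSpace.exp A).map (algebraMap ℝ ℂ)
      = ∑' k : ℕ, (k.factorial : ℝ)⁻¹ • (A.map (algebraMap ℝ ℂ)) ^ k := by
    rw [NormedSpace.exp_eq_tsum ℝ, ← hΦ _, ΦL.map_tsum hsumR]
    refine tsum_congr fun k => ?_
    rw [ΦL.map_smul, hΦ]
    congr 1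
    exact ((algebraMap ℝ ℂ).mapMatrix.map_pow A k)
  rw [hL, hR]

-- characteristic polynomial evaluation
lemma eval_charpoly (M : Matrix (Fin n) (Fin n) ℂ) (μ : ℂ) :
    (M.charpoly).eval μ = (μ • (1 : Matrix (Fin n) (Fin n) ℂ) - M).det := by
  rw [Matrix.charpoly, eval_det, Matrix.matPolyEquiv_charmatrix]
  congr 1
  rw [Polynomial.eval_sub, Polynomial.eval_X, Polynomial.eval_C]
  congr 1
  ext i j
  by_cases h : i = j <;> simp [Matrix.scalar_apply, Matrix.diagonal, Matrix.one_apply, h]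


variable {n : ℕ}















/-- The endomorphism of `ℂⁿ` associated with a matrix. -/
noncomputable def toEnd (M : Matrix (Fin n) (Fin n) ℂ) : Module.End ℂ (Fin n → ℂ) :=
  Matrix.toLinAlgEquiv' M

lemma toEnd_apply (M : Matrix (Fin n) (Fin n) ℂ) (v : Fin n → ℂ) : toEnd M v = M *ᵥ v :=
  Matrix.toLinAlgEquiv'_apply _ _

/-- Translation between endomorphism and matrix powers. -/
lemma end_sub_pow_apply (M : Matrix (Fin n) (Fin n) ℂ) (μ : ℂ) (k : ℕ) (v : Fin n → ℂ) :
    ((toEnd M - μ • 1) ^ k) v = ((M - μ • 1) ^ k) *ᵥ v := by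
  have h : toEnd M - μ • (1 : Module.End ℂ (Fin n → ℂ))
      = Matrix.toLinAlgEquiv' (M - μ • 1) := by
    rw [toEnd]
    rw [map_sub]
    congr 1
    rw [← Algebra.algebraMap_eq_smul_one, ← Algebra.algebraMap_eq_smul_one]
    exact (AlgEquiv.commutes _ μ).symm
  rw [h, ← map_pow]
  exact Matrix.toLinAlgEquiv'_apply _ _

lemma maxGen_pow_zero {M : Matrix (Fin n) (Fin n) ℂ} {μ : ℂ} {v : Fin n → ℂ}
    (hv : v ∈ (toEnd M).maxGenEigenspace μ) :
    ((M - μ • 1) ^ (n + 2)) *ᵥ v = 0 := by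
  rw [Module.End.maxGenEigenspace_eq_genEigenspace_finrank,
    Module.End.mem_genEigenspace_nat, LinearMap.mem_ker] at hv
  have hfin : Module.finrank ℂ (Fin n → ℂ) ≤ n := by
    simp [Module.finrank_pi]
  have h0 : ((M - μ • 1) ^ Module.finrank ℂ (Fin n → ℂ)) *ᵥ v = 0 := by
    rw [← end_sub_pow_apply]; exact hv
  have hsplit : (M - μ • 1) ^ (n + 2)
      = (M - μ • 1) ^ (n + 2 - Module.finrank ℂ (Fin n → ℂ))
        * (M - μ • 1) ^ Module.finrank ℂ (Fin n → ℂ) := by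
    rw [← pow_add]; congr 1; omega
  rw [hsplit, ← Matrix.mulVec_mulVec, h0, Matrix.mulVec_zero]

lemma mem_maxGen_of_pow {M : Matrix (Fin n) (Fin n) ℂ} {μ : ℂ} {v : Fin n → ℂ}
    (hv : ((M - μ • 1) ^ (n + 2)) *ᵥ v = 0) :
    v ∈ (toEnd M).maxGenEigenspace μ := by
  rw [Module.End.mem_maxGenEigenspace]
  exact ⟨n + 2, by rw [end_sub_pow_apply]; exact hv⟩

lemma hasEigen_isRoot (M : Matrix (Fin n) (Fin n) ℂ) (μ : ℂ)
    (h : Module.End.HasEigenvalue (toEnd M) μ) :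
    (M.charpoly).IsRoot μ := by
  obtain ⟨w, hw⟩ := h.exists_hasEigenvector
  have h1 : M *ᵥ w = μ • w := by
    have := hw.apply_eq_smul
    rwa [toEnd_apply] at this
  have h2 : (μ • (1 : Matrix (Fin n) (Fin n) ℂ) - M) *ᵥ w = 0 := by
    rw [Matrix.sub_mulVec, h1, Matrix.smul_mulVec, Matrix.one_mulVec, sub_self]
  have h3 : (μ • (1 : Matrix (Fin n) (Fin n) ℂ) - M).det = 0 := by
    rw [← Matrix.exists_mulVec_eq_zero_iff]
    exact ⟨w, hw.right, h2⟩
  rw [Polynomial.IsRoot, eval_charpoly, h3]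

lemma hasEigen_of_maxGen_ne_bot {f : Module.End ℂ (Fin n → ℂ)} {μ : ℂ}
    (h : f.maxGenEigenspace μ ≠ ⊥) : f.HasEigenvalue μ :=
  Module.End.HasUnifEigenvalue.lt zero_lt_one h

/-- The core result: two complex matrices with equal exponentials and spectra inside the
horizontal strip are equal. -/
lemma main_core (M1 M2 : Matrix (Fin n) (Fin n) ℂ)
    (hB : NormedSpace.exp M1 = NormedSpace.exp M2)
    (h1 : ∀ μ : ℂ, (M1.charpoly).IsRoot μ → -Real.pi < μ.im ∧ μ.im < Real.pi)
    (h2 : ∀ μ : ℂ, (M2.charpoly).IsRoot μ → -Real.pi < μ.im ∧ μ.im < Real.pi) :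
    M1 = M2 := by
  classical
  obtain ⟨ψ, hψ⟩ := exists_comp_inverse _ (X_sq_dvd_trunc_sub (n + 2) (by omega)) (n + 2)
  set B := NormedSpace.exp M1 with hBdef
  have hB2 : NormedSpace.exp M2 = B := hB.symm
  -- inclusion of generalized eigenspaces into those of B
  have hincl : ∀ (M : Matrix (Fin n) (Fin n) ℂ), NormedSpace.exp M = B → ∀ (μ : ℂ),
      (toEnd M).maxGenEigenspace μ
        ≤ (toEnd B).maxGenEigenspace (Complex.exp μ) := by
    intro M hBM μ v hv
    have h0 := maxGen_pow_zero hv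
    have h := exp_pow_sub_mulVec M μ (n + 2) (by omega) v h0
    rw [hBM] at h
    exact mem_maxGen_of_pow h
  -- strip bounds for eigenvalues
  have hstrip1 : ∀ ν : ℂ, (toEnd M1).maxGenEigenspace ν ≠ ⊥ →
      -Real.pi < ν.im ∧ ν.im < Real.pi := fun ν hν =>
    h1 ν (hasEigen_isRoot M1 ν (hasEigen_of_maxGen_ne_bot hν))
  have hstrip2 : ∀ ν : ℂ, (toEnd M2).maxGenEigenspace ν ≠ ⊥ →
      -Real.pi < ν.im ∧ ν.im < Real.pi := fun ν hν =>
    h2 ν (hasEigen_isRoot M2 ν (hasEigen_of_maxGen_ne_bot hν))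
  -- key: generalized eigenspaces of M2 are contained in those of M1
  have key : ∀ μ : ℂ, (toEnd M2).maxGenEigenspace μ
      ≤ (toEnd M1).maxGenEigenspace μ := by
    intro μ
    rcases eq_or_ne ((toEnd M2).maxGenEigenspace μ) ⊥ with hbot | hne
    · rw [hbot]; exact bot_le
    have hμs := hstrip2 μ hne
    intro v hv
    have hvB := hincl M2 hB2 μ hv
    have htop : v ∈ ⨆ ν : ℂ, (toEnd M1).maxGenEigenspace ν := by
      rw [Module.End.iSup_maxGenEigenspace_eq_top]; trivial
    obtain ⟨c, hc, hsum⟩ := (Submodule.mem_iSup_iff_exists_finsupp _ _).mp htop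
    set s := c.support with hs
    set t := s.filter (fun ν => Complex.exp ν = Complex.exp μ) with ht
    -- the "good" part lies in the μ-eigenspace of M1
    have hv1 : (∑ ν ∈ t, c ν) ∈ (toEnd M1).maxGenEigenspace μ := by
      refine Submodule.sum_mem _ fun ν hν => ?_
      rcases eq_or_ne (c ν) 0 with h0 | h0
      · rw [h0]; exact Submodule.zero_mem _
      have hνb : (toEnd M1).maxGenEigenspace ν ≠ ⊥ := by
        intro hb
        exact h0 (by simpa [hb] using hc ν)
      have hνs := hstrip1 ν hνb
      have hexps : Complex.exp ν = Complex.exp μ := (Finset.mem_filter.mp hν).2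
      have : ν = μ := strip_inj hνs.1 hνs.2 hμs.1 hμs.2 hexps
      exact this ▸ hc ν
    -- the "good" part lies in the `exp μ`-eigenspace of B
    have hv1B : (∑ ν ∈ t, c ν)
        ∈ (toEnd B).maxGenEigenspace (Complex.exp μ) := by
      refine Submodule.sum_mem _ fun ν hν => ?_
      have hexps : Complex.exp ν = Complex.exp μ := (Finset.mem_filter.mp hν).2
      exact hexps ▸ hincl M1 rfl ν (hc ν)
    -- the complementary part
    have hsplit : v = (∑ ν ∈ t, c ν) + ∑ ν ∈ s.filter (fun ν => ¬ Complex.exp ν = Complex.exp μ), c ν := by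
      rw [← hsum, Finsupp.sum, ht, Finset.sum_filter_add_sum_filter_not]
    have hv2B : (∑ ν ∈ s.filter (fun ν => ¬ Complex.exp ν = Complex.exp μ), c ν)
        ∈ ⨆ ζ, ⨆ _ : ζ ≠ Complex.exp μ, (toEnd B).maxGenEigenspace ζ := by
      refine Submodule.sum_mem _ fun ν hν => ?_
      have hexps : Complex.exp ν ≠ Complex.exp μ := (Finset.mem_filter.mp hν).2
      have hmem : c ν ∈ (toEnd B).maxGenEigenspace (Complex.exp ν) :=
        hincl M1 rfl ν (hc ν)
      exact Submodule.mem_iSup_of_mem (Complex.exp ν) (Submodule.mem_iSup_of_mem hexps hmem)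
    have hv2B' : (∑ ν ∈ s.filter (fun ν => ¬ Complex.exp ν = Complex.exp μ), c ν)
        ∈ (toEnd B).maxGenEigenspace (Complex.exp μ) := by
      have := hsplit
      have hx : (∑ ν ∈ s.filter (fun ν => ¬ Complex.exp ν = Complex.exp μ), c ν)
          = v - (∑ ν ∈ t, c ν) := by
        rw [hsplit]; abel
      rw [hx]
      exact Submodule.sub_mem _ hvB hv1B
    have hzero : (∑ ν ∈ s.filter (fun ν => ¬ Complex.exp ν = Complex.exp μ), c ν) = 0 := by
      have hind := Module.End.independent_maxGenEigenspace (toEnd B)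
      have hd := iSupIndep_def.mp hind (Complex.exp μ)
      exact Submodule.disjoint_def.mp hd _ hv2B' hv2B
    have : v = ∑ ν ∈ t, c ν := by rw [hsplit, hzero, add_zero]
    rw [this]
    exact hv1
  -- conclude via the logarithm formula
  have heq : ∀ μ : ℂ, ∀ v ∈ (toEnd M2).maxGenEigenspace μ,
      M1 *ᵥ v = M2 *ᵥ v := by
    intro μ v hv
    have hv1 := key μ hv
    have e1 := log_mulVec (n + 2) ψ hψ M1 μ v (maxGen_pow_zero hv1)
    have e2 := log_mulVec (n + 2) ψ hψ M2 μ v (maxGen_pow_zero hv)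
    rw [hB2] at e2
    rw [← hBdef] at e1
    rw [e1, e2]
  -- all of space is spanned by the M2 eigenspaces
  have hle : (⊤ : Submodule ℂ (Fin n → ℂ)) ≤ LinearMap.eqLocus (toEnd M1) (toEnd M2) := by
    rw [← Module.End.iSup_maxGenEigenspace_eq_top (toEnd M2)]
    refine iSup_le fun μ v hv => ?_
    have h := heq μ v hv
    rw [LinearMap.mem_eqLocus, toEnd_apply, toEnd_apply]
    exact h
  have hEnd : toEnd M1 = toEnd M2 := by
    apply LinearMap.ext
    intro v
    have := hle (Submodule.mem_top (x := v))
    rwa [LinearMap.mem_eqLocus] at this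
  exact Matrix.toLinAlgEquiv'.injective hEnd


end ExpInjAux

open ExpInjAux in
/-- **Injectivity of `exp` on `S(n)`.** The matrix exponential is injective on the set
of real `n × n` matrices all of whose eigenvalues `λ + iμ` satisfy `−π < μ < π`. -/
theorem exp_injOn_strip (n : ℕ) :
    Set.InjOn (NormedSpace.exp)
      {X : Matrix (Fin n) (Fin n) ℝ |
        ∀ z : ℂ, eigR X z → -Real.pi < z.im ∧ z.im < Real.pi} := by
  intro X1 hX1 X2 hX2 hexp
  have hmap : ∀ (Y : Matrix (Fin n) (Fin n) ℝ) (μ : ℂ),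
      ((Y.map (algebraMap ℝ ℂ)).charpoly).IsRoot μ → eigR Y μ := by
    intro Y μ h
    rwa [Matrix.charpoly_map] at h
  have hB : NormedSpace.exp (X1.map (algebraMap ℝ ℂ))
      = NormedSpace.exp (X2.map (algebraMap ℝ ℂ)) := by
    rw [exp_map_ofReal, exp_map_ofReal, hexp]
  have hM := main_core (X1.map (algebraMap ℝ ℂ)) (X2.map (algebraMap ℝ ℂ)) hB
    (fun μ h => hX1 μ (hmap X1 μ h)) (fun μ h => hX2 μ (hmap X2 μ h))
  ext i j
  have h := congrArg (fun M : Matrix (Fin n) (Fin n) ℂ => M i j) hM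
  simp only [Matrix.map_apply] at h
  exact Complex.ofReal_injective (by simpa using h)
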